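/- Let 0 < α < β < 1 and δ = β − α. Set K = sin(πβ/2) − sin(πα/2); then K > 0 and for every μ > 0 and every real y with 0 < y ≤ μ^{1/(2−δ)}, one has |μ + (iy)^{2−δ} + (iy)^{2−β}| ≥ K·μ, where the powers (iy)^{2−δ} and (iy)^{2−β} are principal complex powers. -/

import Mathlib

open Complex Real

lemma cpow_I_mul_pos (y γ : ℝ) (hy : 0 < y) :
    (Complex.I * y) ^ (γ : ℂ) =
      ((y ^ γ : ℝ) : ℂ) * Complex.exp (((Real.pi * γ / 2 : ℝ) : ℂ) * Complex.I) := by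
  have hne : (Complex.I * (y : ℂ)) ≠ 0 := by
    simp [Complex.ext_iff, hy.ne']
  have habs : ‖Complex.I * (y : ℂ)‖ = y := by
    simp [abs_of_pos hy]
  have harg : Complex.arg (Complex.I * y) = Real.pi / 2 := by
    rw [Complex.arg_eq_pi_div_two_iff]
    constructor <;> simp [hy]
  rw [Complex.cpow_def_of_ne_zero hne, Complex.log, habs, harg]
  rw [show (((Real.log y : ℝ) : ℂ) + ((Real.pi / 2 : ℝ) : ℂ) * Complex.I) * (γ : ℂ)
      = ((Real.log y * γ : ℝ) : ℂ) + ((Real.pi * γ / 2 : ℝ) : ℂ) * Complex.I by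
    push_cast; ring]
  rw [Complex.exp_add, ← Complex.ofReal_exp, Real.rpow_def_of_pos hy]

lemma rot_re (a ψ θ : ℝ) :
    (Complex.exp ((ψ : ℂ) * Complex.I) * (((a : ℝ) : ℂ) * Complex.exp ((θ : ℂ) * Complex.I))).re
      = a * Real.cos (ψ + θ) := by
  have h : Complex.exp ((ψ : ℂ) * Complex.I) * (((a : ℝ) : ℂ) * Complex.exp ((θ : ℂ) * Complex.I))
      = ((a : ℝ) : ℂ) * Complex.exp (((ψ + θ : ℝ) : ℂ) * Complex.I) := by
    rw [show (((ψ + θ : ℝ)) : ℂ) * Complex.I = (ψ : ℂ) * Complex.I + (θ : ℂ) * Complex.I by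
      push_cast; ring, Complex.exp_add]
    ring
  rw [h]
  simp only [Complex.mul_re, Complex.ofReal_re, Complex.ofReal_im,
    Complex.exp_ofReal_mul_I_re, Complex.exp_ofReal_mul_I_im, zero_mul, sub_zero]

lemma rot_re' (a ψ : ℝ) :
    (Complex.exp ((ψ : ℂ) * Complex.I) * ((a : ℝ) : ℂ)).re = a * Real.cos ψ := by
  rw [mul_comm]
  simp only [Complex.mul_re, Complex.ofReal_re, Complex.ofReal_im,
    Complex.exp_ofReal_mul_I_re, Complex.exp_ofReal_mul_I_im, zero_mul, sub_zero]

/-- Estimate (sol7): with `K = sin(πβ/2) - sin(πα/2) > 0`, for every `μ > 0` and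
`0 < y ≤ μ^(1/(2-δ))`, one has `|μ + (iy)^(2-δ) + (iy)^(2-β)| ≥ K·μ`. -/
theorem lower_bound_small_y (α β δ : ℝ) (hα : 0 < α) (hαβ : α < β) (hβ : β < 1)
    (hδ : δ = β - α) :
    0 < Real.sin (Real.pi * β / 2) - Real.sin (Real.pi * α / 2) ∧
      ∀ μ : ℝ, 0 < μ → ∀ y : ℝ, 0 < y → y ≤ μ ^ ((1 : ℝ) / (2 - δ)) →
        (Real.sin (Real.pi * β / 2) - Real.sin (Real.pi * α / 2)) * μ ≤
          ‖(μ : ℂ) + (Complex.I * y) ^ ((2 : ℂ) - (δ : ℂ))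
            + (Complex.I * y) ^ ((2 : ℂ) - (β : ℂ))‖ := by
  have hπ : (0:ℝ) < Real.pi := Real.pi_pos
  have hδ0 : 0 < δ := by rw [hδ]; linarith
  have hδβ : δ < β := by rw [hδ]; linarith
  -- angle facts
  have hαr : 0 < Real.pi * α / 2 := by positivity
  have hβr : Real.pi * β / 2 < Real.pi / 2 := by nlinarith
  have hK : 0 < Real.sin (Real.pi * β / 2) - Real.sin (Real.pi * α / 2) := by
    have := Real.strictMonoOn_sin (a := Real.pi * α / 2) (b := Real.pi * β / 2)
      (by constructor <;> nlinarith) (by constructor <;> nlinarith) (by nlinarith)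
    linarith
  refine ⟨hK, ?_⟩
  intro μ hμ y hy _
  -- K ≤ sin(πδ/2)
  have hsinδ : Real.sin (Real.pi * β / 2) - Real.sin (Real.pi * α / 2)
      ≤ Real.sin (Real.pi * δ / 2) := by
    have hadd : Real.pi * β / 2 = Real.pi * α / 2 + Real.pi * δ / 2 := by
      rw [hδ]; ring
    rw [hadd, Real.sin_add]
    have h1 : Real.cos (Real.pi * δ / 2) ≤ 1 := Real.cos_le_one _
    have h2 : 0 ≤ Real.sin (Real.pi * α / 2) :=
      Real.sin_nonneg_of_nonneg_of_le_pi (by positivity) (by nlinarith)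
    have h3 : 0 ≤ Real.cos (Real.pi * α / 2) :=
      Real.cos_nonneg_of_mem_Icc (by constructor <;> nlinarith)
    have h4 : 0 ≤ Real.sin (Real.pi * δ / 2) :=
      Real.sin_nonneg_of_nonneg_of_le_pi (by positivity) (by nlinarith)
    have h5 : Real.cos (Real.pi * α / 2) ≤ 1 := Real.cos_le_one _
    nlinarith [mul_nonneg h2 (sub_nonneg.mpr h1), mul_nonneg h4 (sub_nonneg.mpr h3)]
  set z : ℂ := (μ : ℂ) + (Complex.I * y) ^ ((2 : ℂ) - (δ : ℂ))
      + (Complex.I * y) ^ ((2 : ℂ) - (β : ℂ)) with hz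
  set ψ : ℝ := Real.pi * δ / 2 - Real.pi / 2 with hψ
  have key : (Complex.exp ((ψ : ℂ) * Complex.I) * z).re
      = μ * Real.sin (Real.pi * δ / 2) + y ^ (2 - β) * Real.sin (Real.pi * α / 2) := by
    have e1 := cpow_I_mul_pos y (2 - δ) hy
    have e2 := cpow_I_mul_pos y (2 - β) hy
    rw [show ((2 : ℂ) - (δ : ℂ)) = ((2 - δ : ℝ) : ℂ) by push_cast; ring] at *
    rw [show ((2 : ℂ) - (β : ℂ)) = ((2 - β : ℝ) : ℂ) by push_cast; ring] at *
    rw [hz, e1, e2]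
    rw [mul_add, mul_add]
    simp only [Complex.add_re]
    rw [rot_re, rot_re, rot_re']
    have c1 : Real.cos ψ = Real.sin (Real.pi * δ / 2) := by
      rw [hψ, show Real.pi * δ / 2 - Real.pi / 2 = -(Real.pi / 2 - Real.pi * δ / 2) by ring,
        Real.cos_neg, Real.cos_pi_div_two_sub]
    have c2 : Real.cos (ψ + Real.pi * (2 - δ) / 2) = 0 := by
      rw [show ψ + Real.pi * (2 - δ) / 2 = Real.pi / 2 by rw [hψ]; ring,
        Real.cos_pi_div_two]
    have c3 : Real.cos (ψ + Real.pi * (2 - β) / 2) = Real.sin (Real.pi * α / 2) := by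
      rw [show ψ + Real.pi * (2 - β) / 2 = Real.pi / 2 - Real.pi * α / 2 by
        rw [hψ, hδ]; ring, Real.cos_pi_div_two_sub]
    rw [c1, c2, c3]
    ring
  have habs : ‖Complex.exp ((ψ : ℂ) * Complex.I) * z‖ = ‖z‖ := by
    rw [norm_mul, Complex.norm_exp_ofReal_mul_I, one_mul]
  calc (Real.sin (Real.pi * β / 2) - Real.sin (Real.pi * α / 2)) * μ
      ≤ μ * Real.sin (Real.pi * δ / 2) + y ^ (2 - β) * Real.sin (Real.pi * α / 2) := by
        have h2 : 0 ≤ Real.sin (Real.pi * α / 2) :=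
          Real.sin_nonneg_of_nonneg_of_le_pi (by positivity) (by nlinarith)
        have h5 : (0:ℝ) ≤ y ^ (2 - β) := Real.rpow_nonneg hy.le _
        nlinarith
    _ = (Complex.exp ((ψ : ℂ) * Complex.I) * z).re := key.symm
    _ ≤ ‖Complex.exp ((ψ : ℂ) * Complex.I) * z‖ := Complex.re_le_norm _
    _ = ‖z‖ := habs
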